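/- arXiv:2105.07577 — 3 statements merged into one kernel-verified Lean document; each statement's English description precedes it below -/
import Mathlib

section
/- Let κ > 0 and E > 0. Let p : ℝ → ℝ satisfy p''(t) + sin p(t) = 0 with (p'(t))²/2 = E + 1 + cos p(t) and p(0) = 0, p'(0) > 0, so that p(t + T(E)) = p(t) + 2π with T(E) = (1/√2)∫_{−π}^{π} dx/√(E + 1 + cos x). Let F_E = X(T(E)) be the Floquet matrix of the linearization w'' + (2κ + cos p(t))w = 0, where X is the fundamental matrix solution of the associated first-order system with X(0) = I. Then the synchronous solution is linearly unstable, i.e. |tr F_E| > 2 (equivalently F_E has a real eigenvalue of absolute value greater than 1), if and only if 4κ − 2 < E < 4κ. For all other E > 0 the eigenvalues of F_E lie on the unit circle (|tr F_E| ≤ 2). -/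
open Real

attribute [local instance] Matrix.frobeniusNormedAddCommGroup Matrix.frobeniusNormedSpace
  Matrix.frobeniusNormedRing

open Set

private lemma ivt_sign {f : ℝ → ℝ} (hf : Continuous f) {a b : ℝ}
    (h : ∀ t ∈ Set.Ioo a b, f t ≠ 0) {t1 t2 : ℝ}
    (h1 : t1 ∈ Set.Ioo a b) (h2 : t2 ∈ Set.Ioo a b) (hpos : 0 < f t1) : 0 < f t2 := by
  by_contra hneg
  have h2' : f t2 < 0 := lt_of_le_of_ne (not_lt.mp hneg) (h t2 h2)
  rcases le_or_gt t1 t2 with hle | hlt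
  · have hIcc : Set.Icc t1 t2 ⊆ Set.Ioo a b := fun x hx =>
      ⟨lt_of_lt_of_le h1.1 hx.1, lt_of_le_of_lt hx.2 h2.2⟩
    obtain ⟨c, hc, hc0⟩ := intermediate_value_Icc' hle hf.continuousOn ⟨h2'.le, hpos.le⟩
    exact h c (hIcc hc) hc0
  · have hIcc : Set.Icc t2 t1 ⊆ Set.Ioo a b := fun x hx =>
      ⟨lt_of_lt_of_le h2.1 hx.1, lt_of_le_of_lt hx.2 h1.2⟩
    obtain ⟨c, hc, hc0⟩ := intermediate_value_Icc hlt.le hf.continuousOn ⟨h2'.le, hpos.le⟩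
    exact h c (hIcc hc) hc0

private lemma eig_vec (a b c d lam : ℝ) (hdet : a * d - b * c = 1)
    (hchar : lam ^ 2 - (a + d) * lam + 1 = 0) (hlam : lam ^ 2 ≠ 1) :
    ∃ v0 v1 : ℝ, ¬(v0 = 0 ∧ v1 = 0) ∧ a * v0 + b * v1 = lam * v0 ∧
      c * v0 + d * v1 = lam * v1 := by
  by_cases hb : b = 0
  · subst hb
    have hfac : (a - lam) * (d - lam) = 0 := by linear_combination hchar + hdet
    rcases mul_eq_zero.mp hfac with ha | hd
    · by_cases hcd : lam - d = 0 ∧ c = 0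
      · exact absurd (by linear_combination hdet + lam * hcd.1 - d * ha : lam ^ 2 = 1) hlam
      · exact ⟨lam - d, c, hcd, by linear_combination (lam - d) * ha, by ring⟩
    · by_cases hac : a - lam = 0
      · exact absurd (by linear_combination hdet - lam * hac - a * hd : lam ^ 2 = 1) hlam
      · exact ⟨0, 1, by simp, by simp, by linear_combination hd⟩
  · refine ⟨b, lam - a, fun h => hb h.1, by ring, ?_⟩
    linear_combination -hchar - hdet

private lemma specA_core (a b c d c1 c2 lam mu : ℝ) (hdet : a * d - b * c = 1)
    (hinv : ∀ x y : ℝ, c1 * (a * x + b * y) ^ 2 + c2 * (c * x + d * y) ^ 2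
      = c1 * x ^ 2 + c2 * y ^ 2)
    (hsgn : (0 ≤ c1 ∧ 0 < c2) ∨ (c1 < 0 ∧ c2 ≤ 0))
    (hlm : lam * mu = 1) (hlne : lam ≠ mu)
    (hcharl : lam ^ 2 - (a + d) * lam + 1 = 0)
    (hcharm : mu ^ 2 - (a + d) * mu + 1 = 0) : False := by
  have hl2 : lam ^ 2 ≠ 1 := by
    intro h
    have hl0 : lam ≠ 0 := by intro h0; rw [h0] at h; norm_num at h
    exact hlne (mul_left_cancel₀ hl0 (by linear_combination hlm - h)).symm
  have hm2 : mu ^ 2 ≠ 1 := by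
    intro h
    have hm0 : mu ≠ 0 := by intro h0; rw [h0] at h; norm_num at h
    exact hlne (mul_right_cancel₀ hm0 (by linear_combination hlm - h))
  obtain ⟨v0, v1, hv, hv1, hv2⟩ := eig_vec a b c d lam hdet hcharl hl2
  obtain ⟨u0, u1, hu, hu1, hu2⟩ := eig_vec a b c d mu hdet hcharm hm2
  have hqv : c1 * v0 ^ 2 + c2 * v1 ^ 2 = 0 := by
    have h := hinv v0 v1
    rw [hv1, hv2] at h
    have hq : (lam ^ 2 - 1) * (c1 * v0 ^ 2 + c2 * v1 ^ 2) = 0 := by linear_combination h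
    rcases mul_eq_zero.mp hq with h' | h'
    · exact absurd (by linarith : lam ^ 2 = 1) hl2
    · exact h'
  have hqu : c1 * u0 ^ 2 + c2 * u1 ^ 2 = 0 := by
    have h := hinv u0 u1
    rw [hu1, hu2] at h
    have hq : (mu ^ 2 - 1) * (c1 * u0 ^ 2 + c2 * u1 ^ 2) = 0 := by linear_combination h
    rcases mul_eq_zero.mp hq with h' | h'
    · exact absurd (by linarith : mu ^ 2 = 1) hm2
    · exact h'
  rcases hsgn with ⟨h1, h2⟩ | ⟨h1, h2⟩
  · have hv1z : v1 = 0 := by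
      have : v1 ^ 2 = 0 := by nlinarith [sq_nonneg v0, sq_nonneg v1]
      exact pow_eq_zero_iff two_ne_zero |>.mp this
    have hu1z : u1 = 0 := by
      have : u1 ^ 2 = 0 := by nlinarith [sq_nonneg u0, sq_nonneg u1]
      exact pow_eq_zero_iff two_ne_zero |>.mp this
    have hv0 : v0 ≠ 0 := fun h => hv ⟨h, hv1z⟩
    have hu0 : u0 ≠ 0 := fun h => hu ⟨h, hu1z⟩
    have ha1 : a = lam := by
      have h := hv1; rw [hv1z] at h
      exact mul_right_cancel₀ hv0 (by linarith : a * v0 = lam * v0)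
    have ha2 : a = mu := by
      have h := hu1; rw [hu1z] at h
      exact mul_right_cancel₀ hu0 (by linarith : a * u0 = mu * u0)
    exact hlne (ha1 ▸ ha2 ▸ rfl)
  · have hv0z : v0 = 0 := by
      have : v0 ^ 2 = 0 := by nlinarith [sq_nonneg v0, sq_nonneg v1]
      exact pow_eq_zero_iff two_ne_zero |>.mp this
    have hu0z : u0 = 0 := by
      have : u0 ^ 2 = 0 := by nlinarith [sq_nonneg u0, sq_nonneg u1]
      exact pow_eq_zero_iff two_ne_zero |>.mp this
    have hv1' : v1 ≠ 0 := fun h => hv ⟨hv0z, h⟩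
    have hu1' : u1 ≠ 0 := fun h => hu ⟨hu0z, h⟩
    have hd1 : d = lam := by
      have h := hv2; rw [hv0z] at h
      exact mul_right_cancel₀ hv1' (by linarith : d * v1 = lam * v1)
    have hd2 : d = mu := by
      have h := hu2; rw [hu0z] at h
      exact mul_right_cancel₀ hu1' (by linarith : d * u1 = mu * u1)
    exact hlne (hd1 ▸ hd2 ▸ rfl)

private lemma specA (a b c d c1 c2 : ℝ) (hdet : a * d - b * c = 1)
    (hinv : ∀ x y : ℝ, c1 * (a * x + b * y) ^ 2 + c2 * (c * x + d * y) ^ 2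
      = c1 * x ^ 2 + c2 * y ^ 2)
    (hsgn : (0 ≤ c1 ∧ 0 < c2) ∨ (c1 < 0 ∧ c2 ≤ 0)) : |a + d| ≤ 2 := by
  by_contra habs
  push_neg at habs
  have htr : 4 < (a + d) ^ 2 := by nlinarith [sq_abs (a + d), abs_nonneg (a + d)]
  have hDpos : 0 < (a + d) ^ 2 - 4 := by linarith
  have hD2 : Real.sqrt ((a + d) ^ 2 - 4) ^ 2 = (a + d) ^ 2 - 4 := Real.sq_sqrt hDpos.le
  have hDne : 0 < Real.sqrt ((a + d) ^ 2 - 4) := Real.sqrt_pos.mpr hDpos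
  refine specA_core a b c d c1 c2 ((a + d + Real.sqrt ((a + d) ^ 2 - 4)) / 2)
    ((a + d - Real.sqrt ((a + d) ^ 2 - 4)) / 2) hdet hinv hsgn
    (by linear_combination (-1/4 : ℝ) * hD2) (by intro h; nlinarith)
    (by linear_combination (1/4 : ℝ) * hD2) (by linear_combination (1/4 : ℝ) * hD2)
private lemma sign_pick {f : ℝ → ℝ} (hf : Continuous f) {a b : ℝ} (hab : a < b)
    (h : ∀ t ∈ Set.Ioo a b, f t ≠ 0) :
    ∃ e : ℝ, (e = 1 ∨ e = -1) ∧ ∀ t ∈ Set.Ioo a b, 0 < e * f t := by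
  have hmid : (a + b) / 2 ∈ Set.Ioo a b := ⟨by linarith, by linarith⟩
  rcases lt_or_gt_of_ne (h _ hmid) with hneg | hpos
  · refine ⟨-1, Or.inr rfl, fun t ht => ?_⟩
    have h' : ∀ t ∈ Set.Ioo a b, (fun s => -1 * f s) t ≠ 0 := fun t ht => by
      simp only [neg_mul, one_mul, ne_eq, neg_eq_zero]; exact h t ht
    exact ivt_sign (continuous_const.mul hf) h' hmid ht (by simpa using hneg)
  · refine ⟨1, Or.inl rfl, fun t ht => ?_⟩
    have h' : ∀ t ∈ Set.Ioo a b, (fun s => 1 * f s) t ≠ 0 := fun t ht => by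
      simpa using h t ht
    have := ivt_sign (continuous_const.mul hf) h' hmid ht (by simpa using hpos)
    simpa using this


private lemma sturm_comp (κ E : ℝ) (p : ℝ → ℝ)
    (hp : ∀ t, HasDerivAt p (deriv p t) t)
    (hp_ode : ∀ t, HasDerivAt (deriv p) (-Real.sin (p t)) t)
    (hp_energy : ∀ t, (deriv p t) ^ 2 / 2 = E + 1 + Real.cos (p t))
    (hneg : 2 * κ - (E + 2) / 2 < 0)
    (w v : ℝ → ℝ) (hw : ∀ t, HasDerivAt w (v t) t)
    (hv : ∀ t, HasDerivAt v (-(2 * κ + Real.cos (p t)) * w t) t)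
    (hnt : ∀ t, ¬(w t = 0 ∧ v t = 0))
    (z1 z2 : ℝ) (h12 : z1 < z2) (hz1 : w z1 = 0) (hz2 : w z2 = 0) :
    ∃ σ ∈ Set.Ioo z1 z2, Real.sin (p σ / 2) = 0 := by
  by_contra hno
  push_neg at hno
  have hpc : Continuous p := continuous_iff_continuousAt.mpr fun t => (hp t).continuousAt
  have hdpc : Continuous (deriv p) :=
    continuous_iff_continuousAt.mpr fun t => (hp_ode t).differentiableAt.continuousAt
  have hwc : Continuous w := continuous_iff_continuousAt.mpr fun t =>
    (hw t).differentiableAt.continuousAt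
  have hvc : Continuous v := continuous_iff_continuousAt.mpr fun t =>
    (hv t).differentiableAt.continuousAt
  have hScont : Continuous (fun t => Real.sin (p t / 2)) :=
    Real.continuous_sin.comp (hpc.div_const 2)
  -- the set of zeros of w in (z1, z2]
  set A : Set ℝ := {t | t ∈ Set.Ioc z1 z2 ∧ w t = 0} with hAdef
  have hAne : z2 ∈ A := ⟨⟨h12, le_refl z2⟩, hz2⟩
  have hAbdd : BddBelow A := ⟨z1, fun x hx => hx.1.1.le⟩
  set z2' := sInf A with hz2'def
  have hz2'le : z2' ≤ z2 := csInf_le hAbdd hAne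
  have hz1le : z1 ≤ z2' := le_csInf ⟨z2, hAne⟩ fun x hx => hx.1.1.le
  have hwz2' : w z2' = 0 := by
    have hcl : closure A ⊆ {t | t ∈ Set.Icc z1 z2 ∧ w t = 0} := by
      apply closure_minimal
      · intro x hx
        exact ⟨⟨hx.1.1.le, hx.1.2⟩, hx.2⟩
      · exact (isClosed_Icc.preimage continuous_id).inter (isClosed_eq hwc continuous_const)
    have := hcl (csInf_mem_closure ⟨z2, hAne⟩ hAbdd)
    exact this.2
  -- v z1 ≠ 0
  have hvz1ne : v z1 ≠ 0 := fun h => hnt z1 ⟨hz1, h⟩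
  -- z1 < z2'
  have hz1lt : z1 < z2' := by
    rcases lt_or_ge z1 z2' with h | h
    · exact h
    · exfalso
      have heq : z2' = z1 := le_antisymm h hz1le
      have hslope := hasDerivAt_iff_tendsto_slope.mp (hw z1)
      have hev := hslope.eventually_ne hvz1ne
      rw [eventually_nhdsWithin_iff] at hev
      rw [Metric.eventually_nhds_iff] at hev
      obtain ⟨ε, hε, hball⟩ := hev
      have hlt : sInf A < z1 + min ε (z2 - z1) := by
        rw [← hz2'def, heq]
        have : 0 < min ε (z2 - z1) := lt_min hε (by linarith)
        linarith
      obtain ⟨x, hxA, hxlt⟩ := (csInf_lt_iff hAbdd ⟨z2, hAne⟩).mp hlt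
      have hxz1 : z1 < x := hxA.1.1
      have hdist : dist x z1 < ε := by
        rw [Real.dist_eq, abs_of_pos (by linarith : (0:ℝ) < x - z1)]
        have := min_le_left ε (z2 - z1)
        linarith
      have := hball hdist (by exact ne_of_gt hxz1 : x ∈ {y | y ≠ z1})
      apply this
      rw [slope_def_field, hxA.2, hz1]
      simp
  -- w does not vanish on (z1, z2')
  have hwne : ∀ t ∈ Set.Ioo z1 z2', w t ≠ 0 := by
    intro t ht hwt
    have : t ∈ A := ⟨⟨ht.1, le_trans ht.2.le hz2'le⟩, hwt⟩
    exact absurd (csInf_le hAbdd this) (not_le.mpr ht.2)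
  -- S does not vanish on (z1, z2)
  have hSne : ∀ t ∈ Set.Ioo z1 z2, Real.sin (p t / 2) ≠ 0 := fun t ht => hno t ht
  obtain ⟨e1, he1, hew⟩ := sign_pick hwc hz1lt hwne
  obtain ⟨e2, he2, heS'⟩ := sign_pick hScont h12 hSne
  have heS : ∀ t ∈ Set.Ioo z1 z2', 0 < e2 * Real.sin (p t / 2) := fun t ht =>
    heS' t ⟨ht.1, lt_of_lt_of_le ht.2 hz2'le⟩
  have he1sq : e1 * e1 = 1 := by rcases he1 with h | h <;> rw [h] <;> norm_num
  have he2sq : e2 * e2 = 1 := by rcases he2 with h | h <;> rw [h] <;> norm_num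
  -- The comparison function G
  set G : ℝ → ℝ := fun t => e1 * e2 *
    (Real.cos (p t / 2) * (deriv p t / 2) * w t - Real.sin (p t / 2) * v t) with hGdef
  have hG : ∀ t, HasDerivAt G
      (e1 * e2 * ((2 * κ - (E + 2) / 2) * (Real.sin (p t / 2) * w t))) t := by
    intro t
    have hhalf : HasDerivAt (fun t => p t / 2) (deriv p t / 2) t := (hp t).div_const 2
    have hS' : HasDerivAt (fun t => Real.sin (p t / 2))
      (Real.cos (p t / 2) * (deriv p t / 2)) t := hhalf.sin
    have hC' : HasDerivAt (fun t => Real.cos (p t / 2))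
      (-Real.sin (p t / 2) * (deriv p t / 2)) t := hhalf.cos
    have hdp2 : HasDerivAt (fun t => deriv p t / 2) (-Real.sin (p t) / 2) t :=
      (hp_ode t).div_const 2
    have H := (((hC'.mul hdp2).mul (hw t)).sub (hS'.mul (hv t))).const_mul (e1 * e2)
    rw [hGdef]
    refine HasDerivAt.congr_deriv H (Eq.symm ?_)
    simp only [Pi.mul_apply, Pi.pow_apply, Pi.neg_apply, Pi.add_apply, Pi.sub_apply]
    have hE := hp_energy t
    have hsin2 : Real.sin (p t) = 2 * Real.sin (p t / 2) * Real.cos (p t / 2) := by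
      have h := Real.sin_two_mul (p t / 2)
      rw [(by ring : 2 * (p t / 2) = p t)] at h
      linarith
    have hcos2 : Real.cos (p t) = 2 * Real.cos (p t / 2) ^ 2 - 1 := by
      have h := Real.cos_two_mul (p t / 2)
      rw [(by ring : 2 * (p t / 2) = p t)] at h
      linarith
    linear_combination ((e1 * e2 * Real.sin (p t / 2) * w t) / 2) * hE
      + ((e1 * e2 * Real.cos (p t / 2) * w t) / 2) * hsin2
      + (-(e1 * e2 * Real.sin (p t / 2) * w t) / 2) * hcos2
  have hGcont : Continuous G := by
    rw [hGdef]
    apply Continuous.mul continuous_const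
    exact (((Real.continuous_cos.comp (hpc.div_const 2)).mul (hdpc.div_const 2)).mul hwc).sub
      (hScont.mul hvc)
  -- boundary sign facts
  have hSz1 : 0 ≤ e2 * Real.sin (p z1 / 2) := by
    have htend : Filter.Tendsto (fun t => e2 * Real.sin (p t / 2)) (nhdsWithin z1 (Set.Ioi z1))
        (nhds (e2 * Real.sin (p z1 / 2))) :=
      ((continuous_const.mul hScont).tendsto z1).mono_left nhdsWithin_le_nhds
    refine ge_of_tendsto htend ?_
    filter_upwards [Ioo_mem_nhdsGT_of_mem (⟨le_refl z1, hz1lt⟩ : z1 ∈ Set.Ico z1 z2')]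
      with t ht
    exact (heS t ht).le
  have hSz2' : 0 ≤ e2 * Real.sin (p z2' / 2) := by
    have htend : Filter.Tendsto (fun t => e2 * Real.sin (p t / 2)) (nhdsWithin z2' (Set.Iio z2'))
        (nhds (e2 * Real.sin (p z2' / 2))) :=
      ((continuous_const.mul hScont).tendsto z2').mono_left nhdsWithin_le_nhds
    refine ge_of_tendsto htend ?_
    filter_upwards [Ioo_mem_nhdsLT_of_mem (⟨hz1lt, le_refl z2'⟩ : z2' ∈ Set.Ioc z1 z2')]
      with t ht
    exact (heS t ht).le
  have hvz1 : 0 ≤ e1 * v z1 := by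
    have hslope := hasDerivAt_iff_tendsto_slope.mp (hw z1)
    have htend : Filter.Tendsto (fun t => e1 * slope w z1 t) (nhdsWithin z1 (Set.Ioi z1))
        (nhds (e1 * v z1)) :=
      (hslope.const_mul e1).mono_left
        (nhdsWithin_mono z1 (fun y hy => ne_of_gt hy))
    refine ge_of_tendsto htend ?_
    filter_upwards [Ioo_mem_nhdsGT_of_mem (⟨le_refl z1, hz1lt⟩ : z1 ∈ Set.Ico z1 z2')]
      with t ht
    rw [slope_def_field, hz1, sub_zero, ← mul_div_assoc]
    have h1 : 0 < e1 * w t := hew t ht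
    have h2 : 0 < t - z1 := by linarith [ht.1]
    exact (div_pos h1 h2).le
  have hvz2' : e1 * v z2' ≤ 0 := by
    have hslope := hasDerivAt_iff_tendsto_slope.mp (hw z2')
    have htend : Filter.Tendsto (fun t => e1 * slope w z2' t) (nhdsWithin z2' (Set.Iio z2'))
        (nhds (e1 * v z2')) :=
      (hslope.const_mul e1).mono_left
        (nhdsWithin_mono z2' (fun y hy => ne_of_lt hy))
    refine le_of_tendsto htend ?_
    filter_upwards [Ioo_mem_nhdsLT_of_mem (⟨hz1lt, le_refl z2'⟩ : z2' ∈ Set.Ioc z1 z2')]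
      with t ht
    rw [slope_def_field, hwz2', sub_zero, ← mul_div_assoc]
    have h1 : 0 < e1 * w t := hew t ht
    have h2 : t - z2' < 0 := by linarith [ht.2]
    exact (div_neg_of_pos_of_neg h1 h2).le
  -- G is strictly decreasing on [z1, z2']
  have hanti : StrictAntiOn G (Set.Icc z1 z2') := by
    apply strictAntiOn_of_deriv_neg (convex_Icc z1 z2') hGcont.continuousOn
    intro t ht
    rw [interior_Icc] at ht
    rw [(hG t).deriv]
    have h1 : 0 < e2 * Real.sin (p t / 2) := heS t ht
    have h2 : 0 < e1 * w t := hew t ht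
    nlinarith [mul_neg_of_neg_of_pos hneg (mul_pos h1 h2)]
  have hlt := hanti (Set.left_mem_Icc.mpr hz1lt.le) (Set.right_mem_Icc.mpr hz1lt.le) hz1lt
  rw [hGdef] at hlt
  simp only [hz1, hwz2', mul_zero, zero_sub] at hlt
  nlinarith [hSz1, hSz2', hvz1, hvz2', hlt]

private lemma specB (a b c d c1 c2 : ℝ) (hdet : a * d - b * c = 1)
    (hinv : ∀ x y : ℝ, c1 * (a * x + b * y) ^ 2 + c2 * (c * x + d * y) ^ 2
      = c1 * x ^ 2 + c2 * y ^ 2)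
    (h1 : c1 < 0) (h2 : 0 < c2) :
    2 < |a + d| ∨ (a = 1 ∧ b = 0 ∧ c = 0 ∧ d = 1) ∨
      (a = -1 ∧ b = 0 ∧ c = 0 ∧ d = -1) := by
  have hm2' : (0:ℝ) ≤ -c1 / c2 := le_of_lt (div_pos (neg_pos.mpr h1) h2)
  set m := Real.sqrt (-c1 / c2) with hmdef
  have hm2 : c2 * m ^ 2 = -c1 := by
    rw [hmdef, Real.sq_sqrt hm2']
    field_simp
  have hmpos : 0 < m := Real.sqrt_pos.mpr (div_pos (neg_pos.mpr h1) h2)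
  have hmne : m ≠ 0 := hmpos.ne'
  clear_value m
  have hq1 : c1 * (a + b * m) ^ 2 + c2 * (c + d * m) ^ 2 = 0 := by
    linear_combination hinv 1 m + hm2
  have hq2 : c1 * (a - b * m) ^ 2 + c2 * (c - d * m) ^ 2 = 0 := by
    linear_combination hinv 1 (-m) + hm2
  have hA1 : a + b * m ≠ 0 := by
    intro hA
    have hc2C : c2 * (c + d * m) ^ 2 = 0 := by
      linear_combination hq1 - c1 * (a + b * m) * hA
    have hC' : c + d * m = 0 :=
      pow_eq_zero_iff two_ne_zero |>.mp ((mul_eq_zero.mp hc2C).resolve_left h2.ne')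
    have : (1:ℝ) = 0 := by linear_combination -hdet + d * hA - b * hC'
    norm_num at this
  have hA2 : a - b * m ≠ 0 := by
    intro hA
    have hc2C : c2 * (c - d * m) ^ 2 = 0 := by
      linear_combination hq2 - c1 * (a - b * m) * hA
    have hC' : c - d * m = 0 :=
      pow_eq_zero_iff two_ne_zero |>.mp ((mul_eq_zero.mp hc2C).resolve_left h2.ne')
    have : (1:ℝ) = 0 := by linear_combination -hdet + d * hA - b * hC'
    norm_num at this
  have hfac1 : (c + d * m - m * (a + b * m)) * (c + d * m + m * (a + b * m)) = 0 := by
    have h' : c2 * ((c + d * m) ^ 2 - m ^ 2 * (a + b * m) ^ 2) = 0 := by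
      linear_combination hq1 - (a + b*m)^2 * hm2
    have := (mul_eq_zero.mp h').resolve_left h2.ne'
    linear_combination this
  have hfac2 : (c - d * m - m * (a - b * m)) * (c - d * m + m * (a - b * m)) = 0 := by
    have h' : c2 * ((c - d * m) ^ 2 - m ^ 2 * (a - b * m) ^ 2) = 0 := by
      linear_combination hq2 - (a - b*m)^2 * hm2
    have := (mul_eq_zero.mp h').resolve_left h2.ne'
    linear_combination this
  have e1 : c1 * a ^ 2 + c2 * c ^ 2 = c1 := by linear_combination hinv 1 0
  have e2 : c1 * b ^ 2 + c2 * d ^ 2 = c2 := by linear_combination hinv 0 1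
  rcases mul_eq_zero.mp hfac1 with hs1 | hs1 <;> rcases mul_eq_zero.mp hfac2 with hs2 | hs2
  -- case 1: C1 = m A1, C2 = m A2 : degenerate, contra
  · exfalso
    have hc : c = m * a := by linear_combination (hs1 + hs2) / 2
    have hd' : d = m * b := mul_right_cancel₀ hmne
      (by linear_combination (hs1 - hs2) / 2 : d * m = m * b * m)
    have : (1:ℝ) = 0 := by linear_combination -hdet + a * hd' - b * hc
    norm_num at this
  -- case 2: C1 = m A1, C2 = -m A2 : diagonal case
  · have hC1C2 : (c + d * m) * (c - d * m) = -(m ^ 2) * ((a + b * m) * (a - b * m)) := by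
      linear_combination (c - d*m) * hs1 + (m * (a + b*m)) * hs2
    have key : c1 * ((a + b*m) * (a - b*m)) + c2 * ((c + d*m) * (c - d*m)) = 2 * c1 := by
      linear_combination e1 - m^2 * e2 - hm2
    rw [hC1C2] at key
    have h2c1 : c1 * 2 ≠ 0 := by intro h; apply absurd h1; simp; linarith
    have hbil : (a + b * m) * (a - b * m) = 1 := by
      apply mul_left_cancel₀ h2c1
      linear_combination key + ((a + b*m) * (a - b*m)) * hm2
    have hda : d = a := mul_right_cancel₀ hmne
      (by linear_combination (hs1 - hs2) / 2 : d * m = a * m)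
    by_cases hA12 : a + b * m = a - b * m
    · right
      have hb0 : b = 0 := by
        have hbm : b * m = 0 := by linarith
        exact (mul_eq_zero.mp hbm).resolve_right hmne
      subst hb0
      have hA1sq : (a - 1) * (a + 1) = 0 := by linear_combination hbil
      have hc0 : c = 0 := by linear_combination (hs1 + hs2) / 2
      rcases mul_eq_zero.mp hA1sq with h | h
      · exact Or.inl ⟨by linarith, rfl, hc0, by rw [hda]; linarith⟩
      · exact Or.inr ⟨by linarith, rfl, hc0, by rw [hda]; linarith⟩
    · left
      have hne : (a + b*m) - (a - b*m) ≠ 0 := sub_ne_zero.mpr hA12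
      have h4 : 0 < ((a + b*m) - (a - b*m))^2 :=
        lt_of_le_of_ne (sq_nonneg _) (fun h => hne (pow_eq_zero_iff two_ne_zero |>.mp h.symm))
      have htr4 : 4 < (a + d) ^ 2 := by rw [hda]; nlinarith [hbil, h4]
      nlinarith [sq_abs (a + d), abs_nonneg (a + d)]
  -- case 3: C1 = -m A1, C2 = m A2 : swap case, det = -1 contra
  · exfalso
    have hc : c = -(m ^ 2 * b) := by linear_combination (hs1 + hs2) / 2
    have hd' : d = -a := mul_right_cancel₀ hmne
      (by linear_combination (hs1 - hs2) / 2 : d * m = -a * m)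
    have hC1C2 : (c + d * m) * (c - d * m) = -(m ^ 2) * ((a + b * m) * (a - b * m)) := by
      linear_combination (c - d*m) * hs1 - (m * (a + b*m)) * hs2
    have key : c1 * ((a + b*m) * (a - b*m)) + c2 * ((c + d*m) * (c - d*m)) = 2 * c1 := by
      linear_combination e1 - m^2 * e2 - hm2
    rw [hC1C2] at key
    have h2c1 : c1 * 2 ≠ 0 := by intro h; apply absurd h1; simp; linarith
    have hbil : (a + b * m) * (a - b * m) = 1 := by
      apply mul_left_cancel₀ h2c1
      linear_combination key + ((a + b*m) * (a - b*m)) * hm2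
    have : (2:ℝ) = 0 := by linear_combination -hdet + a * hd' - b * hc - hbil
    norm_num at this
  -- case 4: C1 = -m A1, C2 = -m A2 : degenerate, contra
  · exfalso
    have hc : c = -(m * a) := by linear_combination (hs1 + hs2) / 2
    have hd' : d = -(m * b) := mul_right_cancel₀ hmne
      (by linear_combination (hs1 - hs2) / 2 : d * m = -(m * b) * m)
    have : (1:ℝ) = 0 := by linear_combination -hdet + a * hd' - b * hc
    norm_num at this

private lemma conserved (κ E TT : ℝ) (p : ℝ → ℝ)
    (hp : ∀ t, HasDerivAt p (deriv p t) t)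
    (hp_ode : ∀ t, HasDerivAt (deriv p) (-Real.sin (p t)) t)
    (hp_energy : ∀ t, (deriv p t) ^ 2 / 2 = E + 1 + Real.cos (p t))
    (hp0 : p 0 = 0) (hpT : p TT = 2 * π)
    (w v : ℝ → ℝ) (hw : ∀ t, HasDerivAt w (v t) t)
    (hv : ∀ t, HasDerivAt v (-(2 * κ + Real.cos (p t)) * w t) t) :
    2*κ*(E - 4*κ) * (w TT)^2 + (E + 2 - 4*κ) * (v TT)^2
      = 2*κ*(E - 4*κ) * (w 0)^2 + (E + 2 - 4*κ) * (v 0)^2 := by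
  set B : ℝ → ℝ := fun t =>
    (E + 1 - 4*κ + Real.cos (p t)) * v t ^ 2
    - -Real.sin (p t) * deriv p t * (w t * v t)
    + ((-2 * Real.cos (p t) * (E + 1 + Real.cos (p t)) + Real.sin (p t) ^ 2) / 2
        + (2*κ + Real.cos (p t)) * (E + 1 - 4*κ + Real.cos (p t))) * w t ^ 2
    with hBdef
  have hB : ∀ t, HasDerivAt B 0 t := by
    intro t
    have hcos : HasDerivAt (fun t => Real.cos (p t)) (-Real.sin (p t) * deriv p t) t :=
      (hp t).cos
    have hsin : HasDerivAt (fun t => Real.sin (p t)) (Real.cos (p t) * deriv p t) t :=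
      (hp t).sin
    have hq := hp_ode t
    have term1 := (hcos.const_add (E + 1 - 4*κ)).mul ((hv t).pow 2)
    have term2 := (hsin.neg.mul hq).mul ((hw t).mul (hv t))
    have term3 :=
      ((((hcos.const_mul (-2)).mul (hcos.const_add (E + 1))).add (hsin.pow 2)).div_const 2
        |>.add ((hcos.const_add (2*κ)).mul (hcos.const_add (E + 1 - 4*κ)))).mul ((hw t).pow 2)
    have H := (term1.sub term2).add term3
    rw [hBdef]
    refine HasDerivAt.congr_deriv H (Eq.symm ?_)
    simp only [Pi.mul_apply, Pi.pow_apply, Pi.neg_apply, Pi.add_apply, Pi.sub_apply]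
    have hE := hp_energy t
    linear_combination (-2 * Real.cos (p t) * w t * v t) * hE
  have hconst := is_const_of_deriv_eq_zero
    (fun t => ((hB t).differentiableAt : DifferentiableAt ℝ _ t)) (fun t => (hB t).deriv)
  have h := hconst TT 0
  rw [hBdef] at h
  simp only [hp0, hpT] at h
  rw [Real.cos_two_pi, Real.sin_two_pi, Real.cos_zero, Real.sin_zero] at h
  linear_combination h
private lemma green_contra (κ E TT τ : ℝ) (p : ℝ → ℝ)
    (hp : ∀ t, HasDerivAt p (deriv p t) t)
    (hp_ode : ∀ t, HasDerivAt (deriv p) (-Real.sin (p t)) t)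
    (hp_energy : ∀ t, (deriv p t) ^ 2 / 2 = E + 1 + Real.cos (p t))
    (hp0 : p 0 = 0)
    (hlam1 : 0 < 2 * κ - E / 2)
    (hTpos : 0 < TT) (hτ0 : 0 < τ) (hτT : τ < TT)
    (hτ : p τ = π)
    (hper : ∀ t, p (t + TT) = p t + 2 * π)
    (hmono : StrictMono p)
    (w v : ℝ → ℝ) (hw : ∀ t, HasDerivAt w (v t) t)
    (hv : ∀ t, HasDerivAt v (-(2 * κ + Real.cos (p t)) * w t) t)
    (hanti : ∀ t, w (t + TT) = -w t)
    (hzeros : ∀ z, w z = 0 → ∃ n : ℤ, z = τ + n * TT) : False := by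
  have hpc : Continuous p := continuous_iff_continuousAt.mpr fun t => (hp t).continuousAt
  have hdpc : Continuous (deriv p) :=
    continuous_iff_continuousAt.mpr fun t => (hp_ode t).differentiableAt.continuousAt
  have hwc : Continuous w := continuous_iff_continuousAt.mpr fun t =>
    (hw t).differentiableAt.continuousAt
  have hvc : Continuous v := continuous_iff_continuousAt.mpr fun t =>
    (hv t).differentiableAt.continuousAt
  have hπ := Real.pi_pos
  -- v is antiperiodic too
  have hvanti : ∀ t, v (t + TT) = -v t := by
    intro t
    have h1 : HasDerivAt (fun s => w (s + TT)) (v (t + TT)) t := by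
      have := (hw (t + TT)).comp t ((hasDerivAt_id t).add_const TT)
      exact this.congr_deriv (mul_one _)
    have hfe : (fun s => w (s + TT)) = fun s => -w s := funext hanti
    have h2 : HasDerivAt (fun s => w (s + TT)) (-v t) t := by
      rw [hfe]; exact (hw t).neg
    exact h1.unique h2
  -- the Green identity function
  set GC : ℝ → ℝ := fun t =>
    -Real.sin (p t / 2) * (deriv p t / 2) * w t - Real.cos (p t / 2) * v t with hGCdef
  have hGC : ∀ t, HasDerivAt GC
      ((2 * κ - E / 2) * (Real.cos (p t / 2) * w t)) t := by
    intro t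
    have hhalf : HasDerivAt (fun t => p t / 2) (deriv p t / 2) t := (hp t).div_const 2
    have hS' : HasDerivAt (fun t => Real.sin (p t / 2))
      (Real.cos (p t / 2) * (deriv p t / 2)) t := hhalf.sin
    have hC' : HasDerivAt (fun t => Real.cos (p t / 2))
      (-Real.sin (p t / 2) * (deriv p t / 2)) t := hhalf.cos
    have hdp2 : HasDerivAt (fun t => deriv p t / 2) (-Real.sin (p t) / 2) t :=
      (hp_ode t).div_const 2
    have H := (((hS'.neg.mul hdp2).mul (hw t)).sub (hC'.mul (hv t)))
    rw [hGCdef]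
    refine HasDerivAt.congr_deriv H (Eq.symm ?_)
    simp only [Pi.mul_apply, Pi.pow_apply, Pi.neg_apply, Pi.add_apply, Pi.sub_apply]
    have hE := hp_energy t
    have hsin2 : Real.sin (p t) = 2 * Real.sin (p t / 2) * Real.cos (p t / 2) := by
      have h := Real.sin_two_mul (p t / 2)
      rw [(by ring : 2 * (p t / 2) = p t)] at h
      linarith
    have hcos2 : Real.cos (p t) = 2 * Real.cos (p t / 2) ^ 2 - 1 := by
      have h := Real.cos_two_mul (p t / 2)
      rw [(by ring : 2 * (p t / 2) = p t)] at h
      linarith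
    have hpyth : Real.sin (p t / 2) ^ 2 + Real.cos (p t / 2) ^ 2 = 1 :=
      Real.sin_sq_add_cos_sq _
    linear_combination ((Real.cos (p t / 2) * w t) / 2) * hE
      + (-(Real.sin (p t / 2) * w t) / 2) * hsin2
      + (-(Real.cos (p t / 2) * w t) / 2) * hcos2
      + (-(Real.cos (p t / 2) * w t)) * hpyth
  -- FTC over [0, 2 TT]
  have hintegrand : Continuous (fun t => (2 * κ - E / 2) * (Real.cos (p t / 2) * w t)) :=
    continuous_const.mul ((Real.continuous_cos.comp (hpc.div_const 2)).mul hwc)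
  have hFTC := intervalIntegral.integral_eq_sub_of_hasDerivAt
    (f := GC) (f' := fun t => (2 * κ - E / 2) * (Real.cos (p t / 2) * w t))
    (a := 0) (b := 2 * TT) (fun t _ => hGC t) (hintegrand.intervalIntegrable _ _)
  -- GC (2 TT) = GC 0
  have hp2T : p (2 * TT) = 4 * π := by
    have h1 := hper 0
    have h2 := hper TT
    rw [zero_add, hp0] at h1
    rw [(by ring : TT + TT = 2 * TT)] at h2
    rw [h2, h1]; ring
  have hw2T : w (2 * TT) = w 0 := by
    have h1 := hanti 0
    have h2 := hanti TT
    rw [zero_add] at h1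
    rw [(by ring : TT + TT = 2 * TT)] at h2
    rw [h2, h1]; ring
  have hv2T : v (2 * TT) = v 0 := by
    have h1 := hvanti 0
    have h2 := hvanti TT
    rw [zero_add] at h1
    rw [(by ring : TT + TT = 2 * TT)] at h2
    rw [h2, h1]; ring
  have hGCeq : GC (2 * TT) - GC 0 = 0 := by
    rw [hGCdef]
    simp only [hp2T, hp0, hw2T, hv2T]
    rw [(by ring : (4:ℝ) * π / 2 = 2 * π), (by ring : (0:ℝ) / 2 = 0)]
    rw [Real.sin_two_pi, Real.cos_two_pi, Real.sin_zero, Real.cos_zero]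
    ring
  rw [hGCeq] at hFTC
  rw [intervalIntegral.integral_const_mul] at hFTC
  have hIzero : ∫ t in (0:ℝ)..(2 * TT), Real.cos (p t / 2) * w t = 0 := by
    rcases mul_eq_zero.mp hFTC with h | h
    · exact absurd h (by positivity)
    · exact h
  -- the function g = C * w : T-periodic, vanishing exactly at τ + n TT, fixed sign
  set g : ℝ → ℝ := fun t => Real.cos (p t / 2) * w t with hgdef
  have hgc : Continuous g := (Real.continuous_cos.comp (hpc.div_const 2)).mul hwc
  have hgper : ∀ t, g (t + TT) = g t := by
    intro t
    rw [hgdef]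
    simp only
    rw [hper t, hanti t, (by ring : (p t + 2 * π) / 2 = p t / 2 + π), Real.cos_add_pi]
    ring
  have hgperZ : ∀ (n : ℤ) (t : ℝ), g (t + n * TT) = g t := by
    intro n
    induction n using Int.induction_on with
    | zero => intro t; simp
    | succ k ih =>
      intro t
      push_cast
      push_cast at ih
      rw [(by ring : t + ((k:ℝ) + 1) * TT = (t + (k:ℝ) * TT) + TT), hgper, ih]
    | pred k ih =>
      intro t
      push_cast
      push_cast at ih
      have h' := hgper (t + (-(k:ℝ) - 1) * TT)
      rw [(by ring : t + (-(k:ℝ) - 1) * TT + TT = t + -(k:ℝ) * TT)] at h'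
      rw [← h', ih]
  -- g has no zero in (τ, τ + TT)
  have hτT3 : p (τ + TT) = 3 * π := by rw [hper, hτ]; ring
  have hgne : ∀ t ∈ Set.Ioo τ (τ + TT), g t ≠ 0 := by
    intro t ht
    have hπlt : π < p t := by rw [← hτ]; exact hmono ht.1
    have hlt3π : p t < 3 * π := by rw [← hτT3]; exact hmono ht.2
    rw [hgdef]
    simp only
    intro hzero
    rcases mul_eq_zero.mp hzero with h | h
    · obtain ⟨k, hk⟩ := Real.cos_eq_zero_iff.mp h
      have hpt : p t = (2 * (k:ℝ) + 1) * π := by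
        have : p t = (2 * (k:ℝ) + 1) * π / 2 * 2 := by linarith [hk]
        linarith [this]
      rw [hpt] at hπlt hlt3π
      have h1 : (1:ℝ) < 2 * (k:ℝ) + 1 := by
        have := (mul_lt_mul_iff_left₀ hπ).mp (by linarith : 1 * π < (2 * (k:ℝ) + 1) * π)
        linarith
      have h2 : (2 * (k:ℝ) + 1) < 3 := by
        have := (mul_lt_mul_iff_left₀ hπ).mp (by linarith : (2 * (k:ℝ) + 1) * π < 3 * π)
        linarith
      have hk1 : (0:ℝ) < (k:ℝ) := by linarith
      have hk2 : (k:ℝ) < 1 := by linarith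
      have : (0:ℤ) < k := by exact_mod_cast hk1
      have : (1:ℤ) ≤ k := this
      have : (1:ℝ) ≤ (k:ℝ) := by exact_mod_cast this
      linarith
    · obtain ⟨n, hn⟩ := hzeros t h
      rw [hn] at ht
      have h1 : 0 < (n:ℝ) * TT := by linarith [ht.1]
      have h2 : (n:ℝ) * TT < TT := by linarith [ht.2]
      have hn1 : (0:ℝ) < (n:ℝ) := by
        by_contra hc
        push_neg at hc
        nlinarith
      have hn2 : (n:ℝ) < 1 := by
        by_contra hc
        push_neg at hc
        nlinarith
      have : (0:ℤ) < n := by exact_mod_cast hn1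
      have : (1:ℤ) ≤ n := this
      have : (1:ℝ) ≤ (n:ℝ) := by exact_mod_cast this
      linarith
  obtain ⟨e, he, heg⟩ := sign_pick hgc (by linarith : τ < τ + TT) hgne
  -- global nonnegativity of e * g
  have hgτ : g τ = 0 := by
    rw [hgdef]
    simp only [hτ]
    rw [(by ring : π / 2 = π / 2), Real.cos_pi_div_two]
    ring
  have hnonneg : ∀ t, 0 ≤ e * g t := by
    intro t
    set n : ℤ := ⌊(t - τ) / TT⌋ with hndef
    have hn1 : (n:ℝ) ≤ (t - τ) / TT := Int.floor_le _
    have hn2 : (t - τ) / TT < n + 1 := Int.lt_floor_add_one _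
    have ht1 : τ + n * TT ≤ t := by
      have := (le_div_iff₀ hTpos).mp hn1
      linarith
    have ht2 : t < τ + (n + 1) * TT := by
      have := (div_lt_iff₀ hTpos).mp hn2
      linarith
    have hgt : g t = g (t - n * TT) := by
      have := hgperZ n (t - n * TT)
      rw [(by ring : t - n * TT + n * TT = t)] at this
      rw [this]
    rw [hgt]
    rcases eq_or_lt_of_le (by linarith : τ ≤ t - n * TT) with heq | hlt
    · rw [← heq, hgτ]; ring_nf; rfl
    · exact (heg (t - n * TT) ⟨hlt, by linarith⟩).le
  -- integral of e * g over [0, 2 TT] is positive : contradiction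
  have hIzero' : ∫ t in (0:ℝ)..(2 * TT), e * g t = 0 := by
    rw [intervalIntegral.integral_const_mul]
    rw [hgdef]
    simp only
    rw [hIzero]
    ring
  have hu0 : (0:ℝ) ≤ τ + TT / 4 := by linarith
  have huv : τ + TT / 4 < τ + 3 * TT / 4 := by linarith
  have hv2T' : τ + 3 * TT / 4 ≤ 2 * TT := by linarith
  have hint1 : IntervalIntegrable (fun t => e * g t) MeasureTheory.volume 0 (τ + TT / 4) :=
    (continuous_const.mul hgc).intervalIntegrable _ _
  have hint2 : IntervalIntegrable (fun t => e * g t) MeasureTheory.volume (τ + TT / 4)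
      (τ + 3 * TT / 4) := (continuous_const.mul hgc).intervalIntegrable _ _
  have hint3 : IntervalIntegrable (fun t => e * g t) MeasureTheory.volume (τ + 3 * TT / 4)
      (2 * TT) := (continuous_const.mul hgc).intervalIntegrable _ _
  have hsplit1 := intervalIntegral.integral_add_adjacent_intervals hint1 hint2
  have hsplit2 := intervalIntegral.integral_add_adjacent_intervals
    (hint1.trans hint2) hint3
  have hpos2 : 0 < ∫ t in (τ + TT / 4)..(τ + 3 * TT / 4), e * g t := by
    apply intervalIntegral.intervalIntegral_pos_of_pos_on hint2
    · intro x hx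
      exact heg x ⟨by linarith [hx.1], by linarith [hx.2]⟩
    · exact huv
  have hpos1 : 0 ≤ ∫ t in (0:ℝ)..(τ + TT / 4), e * g t :=
    intervalIntegral.integral_nonneg hu0 (fun u _ => hnonneg u)
  have hpos3 : 0 ≤ ∫ t in (τ + 3 * TT / 4)..(2 * TT), e * g t :=
    intervalIntegral.integral_nonneg hv2T' (fun u _ => hnonneg u)
  rw [hIzero'] at hsplit2
  rw [← hsplit1] at hsplit2
  linarith

set_option maxHeartbeats 1600000 in
/-- collapse of instability intervals for the sinusoidal potential: for
the coupled pendula with coupling `κ > 0` and synchronous solution `p` of energy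
surplus `E > 0` (`p'' + sin p = 0`, `(p')²/2 = E + 1 + cos p`), the Floquet matrix
`F_E = X(T(E))` of the linearization `w'' + (2κ + cos p)w = 0` satisfies
`|tr F_E| > 2` (linear instability) if and only if `4κ − 2 < E < 4κ`; for all other
`E > 0` its eigenvalues lie on the unit circle, i.e. `|tr F_E| ≤ 2`. -/
theorem stmt_5 (κ : ℝ) (hκ : 0 < κ) (E : ℝ) (hE : 0 < E)
    (T : ℝ)
    (hT : T = (1 / Real.sqrt 2) * ∫ x in (-π)..π, 1 / Real.sqrt (E + 1 + Real.cos x))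
    (p : ℝ → ℝ)
    (hp_init : p 0 = 0) (hp_init' : 0 < deriv p 0)
    (hp_diff : ∀ t, DifferentiableAt ℝ p t)
    (hp_ode : ∀ t, HasDerivAt (deriv p) (-Real.sin (p t)) t)
    (hp_energy : ∀ t, (deriv p t) ^ 2 / 2 = E + 1 + Real.cos (p t))
    (hp_per : ∀ t, p (t + T) = p t + 2 * π)
    (X : ℝ → Matrix (Fin 2) (Fin 2) ℝ)
    (hX0 : X 0 = 1)
    (hX : ∀ t, HasDerivAt X
      ((!![0, 1; -(2 * κ + Real.cos (p t)), 0] : Matrix (Fin 2) (Fin 2) ℝ) * X t) t) :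
    (2 < |Matrix.trace (X T)| ↔ 4 * κ - 2 < E ∧ E < 4 * κ) ∧
      (¬(4 * κ - 2 < E ∧ E < 4 * κ) → |Matrix.trace (X T)| ≤ 2) := by
  -- basic facts about p
  have hp : ∀ t, HasDerivAt p (deriv p t) t := fun t => (hp_diff t).hasDerivAt
  have hpc : Continuous p := continuous_iff_continuousAt.mpr fun t => (hp_diff t).continuousAt
  have hdpc : Continuous (deriv p) :=
    continuous_iff_continuousAt.mpr fun t => (hp_ode t).differentiableAt.continuousAt
  have hdpne : ∀ t, deriv p t ≠ 0 := by
    intro t h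
    have h1 := hp_energy t
    rw [h] at h1
    nlinarith [Real.neg_one_le_cos (p t)]
  have hdppos : ∀ t, 0 < deriv p t := by
    intro t
    rcases lt_or_ge 0 (deriv p t) with h | h
    · exact h
    · exfalso
      have hlt : deriv p t < 0 := lt_of_le_of_ne h (hdpne t)
      rcases le_or_gt t 0 with hc | hc
      · obtain ⟨s, _, hs⟩ := intermediate_value_Icc hc hdpc.continuousOn
          (⟨hlt.le, hp_init'.le⟩ : (0:ℝ) ∈ Set.Icc (deriv p t) (deriv p 0))
        exact hdpne s hs
      · obtain ⟨s, _, hs⟩ := intermediate_value_Icc' hc.le hdpc.continuousOn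
          (⟨hlt.le, hp_init'.le⟩ : (0:ℝ) ∈ Set.Icc (deriv p t) (deriv p 0))
        exact hdpne s hs
  have hpmono : StrictMono p := strictMono_of_deriv_pos hdppos
  have hpT : p T = 2 * π := by
    have := hp_per 0
    rw [zero_add, hp_init] at this
    linarith
  have hT0 : 0 < T := by
    by_contra h
    have : p T ≤ p 0 := hpmono.monotone (not_lt.mp h)
    rw [hp_init, hpT] at this
    nlinarith [Real.pi_pos]
  -- tau0 with p tau0 = pi
  obtain ⟨τ, hτmem, hτ⟩ : ∃ τ ∈ Set.Icc 0 T, p τ = π := by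
    have h1 : (π:ℝ) ∈ Set.Icc (p 0) (p T) := by
      rw [hp_init, hpT]
      constructor <;> nlinarith [Real.pi_pos]
    obtain ⟨τ, hτ1, hτ2⟩ := intermediate_value_Icc hT0.le hpc.continuousOn h1
    exact ⟨τ, hτ1, hτ2⟩
  have hτ0 : 0 < τ := by
    rcases lt_or_ge 0 τ with h | h
    · exact h
    · exfalso
      have : p τ ≤ p 0 := hpmono.monotone h
      rw [hp_init, hτ] at this
      nlinarith [Real.pi_pos]
  have hτT : τ < T := by
    rcases lt_or_ge τ T with h | h
    · exact h
    · exfalso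
      have : p T ≤ p τ := hpmono.monotone h
      rw [hpT, hτ] at this
      nlinarith [Real.pi_pos]
  -- X entry derivatives
  have entryD : ∀ (i j : Fin 2) t, HasDerivAt (fun s => X s i j)
      (((!![0, 1; -(2 * κ + Real.cos (p t)), 0] : Matrix (Fin 2) (Fin 2) ℝ) * X t) i j) t := by
    intro i j t
    have h := hX t
    let Φ : Matrix (Fin 2) (Fin 2) ℝ →ₗ[ℝ] ℝ :=
      { toFun := fun M => M i j, map_add' := fun M N => rfl, map_smul' := fun c M => rfl }
    have hΦ := (Φ.toContinuousLinearMap.hasFDerivAt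
      (x := X t)).comp_hasDerivAt t h
    exact hΦ
  have hd00 : ∀ t, HasDerivAt (fun s => X s 0 0) (X t 1 0) t := by
    intro t
    have := entryD 0 0 t
    simpa [Matrix.mul_apply, Fin.sum_univ_two] using this
  have hd01 : ∀ t, HasDerivAt (fun s => X s 0 1) (X t 1 1) t := by
    intro t
    have := entryD 0 1 t
    simpa [Matrix.mul_apply, Fin.sum_univ_two] using this
  have hd10 : ∀ t, HasDerivAt (fun s => X s 1 0)
      (-(2 * κ + Real.cos (p t)) * X t 0 0) t := by
    intro t
    have := entryD 1 0 t
    simpa [Matrix.mul_apply, Fin.sum_univ_two] using this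
  have hd11 : ∀ t, HasDerivAt (fun s => X s 1 1)
      (-(2 * κ + Real.cos (p t)) * X t 0 1) t := by
    intro t
    have := entryD 1 1 t
    simpa [Matrix.mul_apply, Fin.sum_univ_two] using this
  -- determinant is 1
  have hdet : ∀ t, X t 0 0 * X t 1 1 - X t 0 1 * X t 1 0 = 1 := by
    have hder : ∀ t, HasDerivAt (fun s => X s 0 0 * X s 1 1 - X s 0 1 * X s 1 0) 0 t := by
      intro t
      have h := (((hd00 t).mul (hd11 t)).sub ((hd01 t).mul (hd10 t)))
      refine HasDerivAt.congr_deriv h (Eq.symm ?_)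
      ring
    have hconst := is_const_of_deriv_eq_zero
      (fun t => ((hder t).differentiableAt : DifferentiableAt ℝ _ t))
      (fun t => (hder t).deriv)
    intro t
    have := hconst t 0
    rw [this, hX0]
    norm_num
  -- periodicity of coefficient
  have hcosper : ∀ t, Real.cos (p (t + T)) = Real.cos (p t) := by
    intro t; rw [hp_per t, Real.cos_add_two_pi]
  -- shifted entry derivatives
  have hshift : ∀ (i j : Fin 2) (f' : ℝ → ℝ),
      (∀ t, HasDerivAt (fun s => X s i j) (f' t) t) →
      ∀ t, HasDerivAt (fun s => X (s + T) i j) (f' (t + T)) t := by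
    intro i j f' hf t
    have := (hf (t + T)).comp t ((hasDerivAt_id t).add_const T)
    exact this.congr_deriv (mul_one _)
  have hs00 := hshift 0 0 _ hd00
  have hs01 := hshift 0 1 _ hd01
  have hs10 := hshift 1 0 _ hd10
  have hs11 := hshift 1 1 _ hd11
  -- translation identity entries
  have htrans : ∀ t, (X (t + T) 0 0 = X t 0 0 * X T 0 0 + X t 0 1 * X T 1 0)
      ∧ (X (t + T) 0 1 = X t 0 0 * X T 0 1 + X t 0 1 * X T 1 1)
      ∧ (X (t + T) 1 0 = X t 1 0 * X T 0 0 + X t 1 1 * X T 1 0)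
      ∧ (X (t + T) 1 1 = X t 1 0 * X T 0 1 + X t 1 1 * X T 1 1) := by
    have hg00 : ∀ t, HasDerivAt
        (fun s => X s 1 1 * X (s + T) 0 0 - X s 0 1 * X (s + T) 1 0) 0 t := by
      intro t
      have h := ((hd11 t).mul (hs00 t)).sub ((hd01 t).mul (hs10 t))
      refine HasDerivAt.congr_deriv h (Eq.symm ?_)
      rw [hcosper t]; ring
    have hg01 : ∀ t, HasDerivAt
        (fun s => X s 1 1 * X (s + T) 0 1 - X s 0 1 * X (s + T) 1 1) 0 t := by
      intro t
      have h := ((hd11 t).mul (hs01 t)).sub ((hd01 t).mul (hs11 t))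
      refine HasDerivAt.congr_deriv h (Eq.symm ?_)
      rw [hcosper t]; ring
    have hg10 : ∀ t, HasDerivAt
        (fun s => X s 0 0 * X (s + T) 1 0 - X s 1 0 * X (s + T) 0 0) 0 t := by
      intro t
      have h := ((hd00 t).mul (hs10 t)).sub ((hd10 t).mul (hs00 t))
      refine HasDerivAt.congr_deriv h (Eq.symm ?_)
      rw [hcosper t]; ring
    have hg11 : ∀ t, HasDerivAt
        (fun s => X s 0 0 * X (s + T) 1 1 - X s 1 0 * X (s + T) 0 1) 0 t := by
      intro t
      have h := ((hd00 t).mul (hs11 t)).sub ((hd10 t).mul (hs01 t))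
      refine HasDerivAt.congr_deriv h (Eq.symm ?_)
      rw [hcosper t]; ring
    have hx0 : ∀ (i j : Fin 2), X 0 i j = if i = j then 1 else 0 := by
      intro i j; rw [hX0]; exact Matrix.one_apply
    have c00 := is_const_of_deriv_eq_zero
      (fun t => ((hg00 t).differentiableAt : DifferentiableAt ℝ _ t)) (fun t => (hg00 t).deriv)
    have c01 := is_const_of_deriv_eq_zero
      (fun t => ((hg01 t).differentiableAt : DifferentiableAt ℝ _ t)) (fun t => (hg01 t).deriv)
    have c10 := is_const_of_deriv_eq_zero
      (fun t => ((hg10 t).differentiableAt : DifferentiableAt ℝ _ t)) (fun t => (hg10 t).deriv)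
    have c11 := is_const_of_deriv_eq_zero
      (fun t => ((hg11 t).differentiableAt : DifferentiableAt ℝ _ t)) (fun t => (hg11 t).deriv)
    intro t
    have e00 := c00 t 0
    have e01 := c01 t 0
    have e10 := c10 t 0
    have e11 := c11 t 0
    simp only [zero_add, hx0] at e00 e01 e10 e11
    norm_num at e00 e01 e10 e11
    have hd := hdet t
    refine ⟨?_, ?_, ?_, ?_⟩
    · linear_combination X t 0 0 * e00 + X t 0 1 * e10 - X (t + T) 0 0 * hd
    · linear_combination X t 0 0 * e01 + X t 0 1 * e11 - X (t + T) 0 1 * hd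
    · linear_combination X t 1 0 * e00 + X t 1 1 * e10 - X (t + T) 1 0 * hd
    · linear_combination X t 1 0 * e01 + X t 1 1 * e11 - X (t + T) 1 1 * hd
  -- the conserved quadratic form applied to solutions extracted from X
  have hBcons : ∀ x y : ℝ,
      2*κ*(E - 4*κ) * (X T 0 0 * x + X T 0 1 * y) ^ 2
        + (E + 2 - 4*κ) * (X T 1 0 * x + X T 1 1 * y) ^ 2
      = 2*κ*(E - 4*κ) * x ^ 2 + (E + 2 - 4*κ) * y ^ 2 := by
    intro x y
    have hw : ∀ t, HasDerivAt (fun t => X t 0 0 * x + X t 0 1 * y)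
        (X t 1 0 * x + X t 1 1 * y) t :=
      fun t => ((hd00 t).mul_const x).add ((hd01 t).mul_const y)
    have hv : ∀ t, HasDerivAt (fun t => X t 1 0 * x + X t 1 1 * y)
        (-(2 * κ + Real.cos (p t)) * (X t 0 0 * x + X t 0 1 * y)) t := by
      intro t
      have h := ((hd10 t).mul_const x).add ((hd11 t).mul_const y)
      refine HasDerivAt.congr_deriv h (Eq.symm ?_)
      ring
    have hc := conserved κ E T p hp hp_ode hp_energy hp_init hpT
      (fun t => X t 0 0 * x + X t 0 1 * y) (fun t => X t 1 0 * x + X t 1 1 * y) hw hv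
    simp only [hX0] at hc
    rw [Matrix.one_apply_eq, Matrix.one_apply_ne (by decide : (0 : Fin 2) ≠ 1),
      Matrix.one_apply_ne (by decide : (1 : Fin 2) ≠ 0), Matrix.one_apply_eq] at hc
    linear_combination hc
  have hdetT := hdet T
  have htr2 : Matrix.trace (X T) = X T 0 0 + X T 1 1 := Matrix.trace_fin_two (X T)
  -- stable part
  have main2 : ¬(4 * κ - 2 < E ∧ E < 4 * κ) → |Matrix.trace (X T)| ≤ 2 := by
    intro hni
    rw [htr2]
    apply specA (X T 0 0) (X T 0 1) (X T 1 0) (X T 1 1) (2*κ*(E - 4*κ)) (E + 2 - 4*κ) hdetT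
      hBcons
    rcases le_or_gt E (4*κ - 2) with h | h
    · right
      constructor
      · nlinarith
      · linarith
    · left
      have h4 : 4 * κ ≤ E := by
        by_contra hc
        exact hni ⟨h, not_le.mp hc⟩
      constructor
      · nlinarith
      · linarith
  -- unstable part
  have main1 : (4 * κ - 2 < E ∧ E < 4 * κ) → 2 < |Matrix.trace (X T)| := by
    rintro ⟨hL, hR⟩
    have hc1 : 2*κ*(E - 4*κ) < 0 := by nlinarith
    have hc2 : (0:ℝ) < E + 2 - 4*κ := by linarith
    have hneg2 : 2 * κ - (E + 2) / 2 < 0 := by linarith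
    have hlam1 : 0 < 2 * κ - E / 2 := by linarith
    rcases specB (X T 0 0) (X T 0 1) (X T 1 0) (X T 1 1) (2*κ*(E - 4*κ)) (E + 2 - 4*κ)
      hdetT hBcons hc1 hc2 with htr | hid | hnid
    · rw [htr2]; exact htr
    · -- F = I : contradiction via Sturm comparison with sin(p/2)
      exfalso
      have hnt : ∀ t, ¬(X t 0 1 = 0 ∧ X t 1 1 = 0) := by
        rintro t ⟨h1, h2⟩
        have := hdet t
        rw [h1, h2] at this
        simp at this
      have hw0 : X 0 0 1 = 0 := by
        rw [hX0]; exact Matrix.one_apply_ne (by decide)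
      obtain ⟨σ, hσ, hsin⟩ := sturm_comp κ E p hp hp_ode hp_energy hneg2
        (fun t => X t 0 1) (fun t => X t 1 1) hd01 hd11 hnt 0 T hT0 hw0 hid.2.1
      obtain ⟨k, hk⟩ := Real.sin_eq_zero_iff.mp hsin
      have hπ := Real.pi_pos
      have hσ1 : 0 < p σ := by rw [← hp_init]; exact hpmono hσ.1
      have hσ2 : p σ < 2 * π := by rw [← hpT]; exact hpmono hσ.2
      have hpσ : p σ = 2 * (k:ℝ) * π := by linarith
      rw [hpσ] at hσ1 hσ2
      have hk1 : (0:ℝ) < (k:ℝ) := by nlinarith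
      have hk2 : (k:ℝ) < 1 := by nlinarith
      have hk1' : (1:ℤ) ≤ k := by exact_mod_cast hk1
      have hk2' : (k:ℝ) ≥ 1 := by exact_mod_cast hk1'
      linarith
    · -- F = -I : contradiction via the Green identity argument
      exfalso
      set x : ℝ := -X τ 0 1 with hxdef
      set y : ℝ := X τ 0 0 with hydef
      set w : ℝ → ℝ := fun t => X t 0 0 * x + X t 0 1 * y with hwdef
      set v : ℝ → ℝ := fun t => X t 1 0 * x + X t 1 1 * y with hvdef
      clear_value w v
      have hw : ∀ t, HasDerivAt w (v t) t := by
        intro t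
        simp only [hwdef, hvdef]
        exact ((hd00 t).mul_const x).add ((hd01 t).mul_const y)
      have hv : ∀ t, HasDerivAt v (-(2 * κ + Real.cos (p t)) * w t) t := by
        intro t
        simp only [hwdef, hvdef]
        have h := ((hd10 t).mul_const x).add ((hd11 t).mul_const y)
        refine HasDerivAt.congr_deriv h (Eq.symm ?_)
        ring
      have hwτ : w τ = 0 := by simp only [hwdef, hxdef, hydef]; ring
      have hnt : ∀ t, ¬(w t = 0 ∧ v t = 0) := by
        rintro t ⟨h1, h2⟩
        simp only [hwdef] at h1
        simp only [hvdef] at h2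
        have hξ0 : x = 0 := by
          linear_combination X t 1 1 * h1 - X t 0 1 * h2 - x * hdet t
        have hξ1 : y = 0 := by
          linear_combination X t 0 0 * h2 - X t 1 0 * h1 - y * hdet t
        rw [hxdef] at hξ0
        rw [hydef] at hξ1
        have hd := hdet τ
        have : (1:ℝ) = 0 := by
          linear_combination -hd + X τ 1 1 * hξ1 + X τ 1 0 * hξ0
        norm_num at this
      have hanti : ∀ t, w (t + T) = -w t := by
        intro t
        obtain ⟨h00, h01, h10, h11⟩ := htrans t
        rw [hnid.1, hnid.2.2.1] at h00
        rw [hnid.2.1, hnid.2.2.2] at h01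
        simp only [hwdef, h00, h01]
        ring
      have hsq : ∀ (n : ℤ) (t : ℝ), (w (t + n * T)) ^ 2 = (w t) ^ 2 := by
        have hper1 : ∀ t, (w (t + T))^2 = (w t)^2 := by
          intro t; rw [hanti t]; ring
        intro n
        induction n using Int.induction_on with
        | zero => intro t; simp
        | succ k ih =>
          intro t
          push_cast
          push_cast at ih
          rw [(by ring : t + ((k:ℝ) + 1) * T = (t + (k:ℝ) * T) + T), hper1, ih]
        | pred k ih =>
          intro t
          push_cast
          push_cast at ih
          have h' := hper1 (t + (-(k:ℝ) - 1) * T)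
          rw [(by ring : t + (-(k:ℝ) - 1) * T + T = t + -(k:ℝ) * T)] at h'
          rw [← h', ih]
      have hzeros : ∀ z, w z = 0 → ∃ n : ℤ, z = τ + n * T := by
        intro z hz
        set n : ℤ := ⌊(z - τ) / T⌋ with hndef
        have hn1 : (n:ℝ) ≤ (z - τ) / T := Int.floor_le _
        have hn2 : (z - τ) / T < n + 1 := Int.lt_floor_add_one _
        have ht1 : τ + n * T ≤ z := by
          have := (le_div_iff₀ hT0).mp hn1
          linarith
        have ht2 : z < τ + (n + 1) * T := by
          have := (div_lt_iff₀ hT0).mp hn2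
          linarith
        have hwz' : w (z - n * T) = 0 := by
          have h1 := hsq n (z - n * T)
          rw [(by ring : z - n * T + n * T = z), hz] at h1
          have : (w (z - n * T))^2 = 0 := by linarith [h1]
          exact pow_eq_zero_iff two_ne_zero |>.mp this
        rcases eq_or_lt_of_le (by linarith : τ ≤ z - n * T) with heq | hlt
        · exact ⟨n, by linarith⟩
        · exfalso
          have hwτT : w (τ + T) = 0 := by rw [hanti τ, hwτ]; ring
          have hπ := Real.pi_pos
          have hp3 : p (τ + T) = 3 * π := by rw [hp_per, hτ]; ring
          have key : ∀ s, τ < s → s < τ + T → Real.sin (p s / 2) = 0 → p s = 2 * π := by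
            intro s hs1 hs2 hsin
            obtain ⟨k, hk⟩ := Real.sin_eq_zero_iff.mp hsin
            have hb1 : π < p s := by rw [← hτ]; exact hpmono hs1
            have hb2 : p s < 3 * π := by rw [← hp3]; exact hpmono hs2
            have hps : p s = 2 * (k:ℝ) * π := by linarith
            rw [hps] at hb1 hb2
            have hk1 : (1:ℝ)/2 < (k:ℝ) := by nlinarith
            have hk2 : (k:ℝ) < 3/2 := by nlinarith
            have hk1' : (1:ℤ) ≤ k := by
              have : (0:ℤ) < k := by exact_mod_cast (by linarith : (0:ℝ) < (k:ℝ))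
              linarith
            have hk2' : (k:ℤ) ≤ 1 := by
              have : (k:ℤ) < 2 := by exact_mod_cast (by linarith : (k:ℝ) < 2)
              linarith
            have : (k:ℤ) = 1 := le_antisymm hk2' hk1'
            rw [hps, this]
            norm_num
          obtain ⟨σ1, hσ1m, hσ1s⟩ := sturm_comp κ E p hp hp_ode hp_energy hneg2
            w v hw hv hnt τ (z - n * T) hlt hwτ hwz'
          obtain ⟨σ2, hσ2m, hσ2s⟩ := sturm_comp κ E p hp hp_ode hp_energy hneg2
            w v hw hv hnt (z - n * T) (τ + T) (by linarith) hwz' hwτT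
          have hσ1p := key σ1 hσ1m.1 (by linarith [hσ1m.2]) hσ1s
          have hσ2p := key σ2 (by linarith [hσ2m.1]) hσ2m.2 hσ2s
          have : σ1 = σ2 := hpmono.injective (by rw [hσ1p, hσ2p])
          linarith [hσ1m.2, hσ2m.1]
      exact green_contra κ E T τ p hp hp_ode hp_energy hp_init hlam1 hT0 hτ0 hτT hτ
        hp_per hpmono w v hw hv hanti hzeros
  constructor
  · constructor
    · intro h2tr
      by_contra hnot
      exact absurd h2tr (not_lt.mpr (main2 hnot))
    · exact main1
  · exact main2
end

section
/- Let G : ℝ → Matrix(2,2,ℝ) be continuous and suppose there exist c > 0 and λ > 0 such that ‖G(t)‖ ≤ c·e^{−λ|t|} for all t ∈ ℝ. Let C : ℝ → Matrix(2,2,ℝ) be a fundamental solution matrix of the linear system C'(t) = G(t)·C(t), with C(t) invertible for every t. Then there exist a constant matrix N and a constant b > 0, depending only on G, such that ‖C(t)·C(−t)⁻¹ − N‖ ≤ b·e^{−λt} for all t > 0; in other words, the time-advance map from −t to t converges to N exponentially as t → ∞. -/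
attribute [local instance] Matrix.frobeniusNormedAddCommGroup Matrix.frobeniusNormedSpace
  Matrix.frobeniusNormedRing

attribute [local instance] Matrix.frobeniusNormedAlgebra

noncomputable instance : CompleteSpace (Matrix (Fin 2) (Fin 2) ℝ) := FiniteDimensional.complete ℝ _

-- Step 1: Gronwall-type bound
lemma step1 (c lam : ℝ) (hc : 0 < c) (hlam : 0 < lam)
    (f f' : ℝ → Matrix (Fin 2) (Fin 2) ℝ) (hf : ∀ t, HasDerivAt f (f' t) t)
    (hbound : ∀ t, 0 ≤ t → ‖f' t‖ ≤ c * Real.exp (-lam * t) * ‖f t‖) :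
    ∀ t, 0 ≤ t → ‖f t‖ ≤ (‖f 0‖ + 1) * Real.exp ((c+1)/lam) := by
  intro T hT
  set A := ‖f 0‖ + 1 with hA
  have hA0 : 0 < A := by positivity
  set B : ℝ → ℝ := fun x => A * Real.exp ((c+1)/lam * (1 - Real.exp (-lam * x))) with hBdef
  set B' : ℝ → ℝ := fun x => ((c+1) * Real.exp (-lam * x)) * B x with hB'def
  have hBpos : ∀ x, 0 < B x := fun x => by positivity
  have hB : ∀ x, HasDerivAt B (B' x) x := by
    intro x
    have hlin : HasDerivAt (fun x : ℝ => -lam * x) (-lam) x := by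
      simpa using (hasDerivAt_id x).const_mul (-lam)
    have h1 : HasDerivAt (fun x : ℝ => Real.exp (-lam * x)) (-lam * Real.exp (-lam * x)) x := by
      simpa [mul_comm] using hlin.exp
    have h2 : HasDerivAt (fun x : ℝ => (c+1)/lam * (1 - Real.exp (-lam * x)))
        ((c+1)/lam * (lam * Real.exp (-lam * x))) x := by
      have := ((hasDerivAt_const x (1:ℝ)).sub h1).const_mul ((c+1)/lam)
      refine this.congr_deriv ?_
      ring
    have h3 := ((Real.hasDerivAt_exp _).comp x h2).const_mul A
    refine h3.congr_deriv ?_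
    simp only [hB'def, hBdef]
    field_simp
  have key := image_norm_le_of_norm_deriv_right_lt_deriv_boundary
    (f := f) (f' := f') (a := 0) (b := T)
    (fun x _ => (hf x).continuousAt.continuousWithinAt)
    (fun x _ => (hf x).hasDerivWithinAt)
    (B := B) (B' := B')
    (by simp [hBdef, hA]) hB
    (fun x hx heq => by
      have hx0 : 0 ≤ x := hx.1
      calc ‖f' x‖ ≤ c * Real.exp (-lam * x) * ‖f x‖ := hbound x hx0
        _ = c * Real.exp (-lam * x) * B x := by rw [heq]
        _ < (c+1) * Real.exp (-lam * x) * B x := by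
            apply mul_lt_mul_of_pos_right (mul_lt_mul_of_pos_right (by linarith) (Real.exp_pos _)) (hBpos x)
        _ = B' x := rfl)
  have hT' : T ∈ Set.Icc (0:ℝ) T := ⟨hT, le_refl T⟩
  have := key hT'
  refine this.trans ?_
  simp only [hBdef]
  apply mul_le_mul_of_nonneg_left _ hA0.le
  apply Real.exp_le_exp.mpr
  have h1 : 0 < Real.exp (-lam * T) := Real.exp_pos _
  have h2 : Real.exp (-lam * T) ≤ 1 := Real.exp_le_one_iff.mpr (by nlinarith)
  have : (1 - Real.exp (-lam * T)) ≤ 1 := by linarith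
  have hpos : 0 ≤ (c+1)/lam := by positivity
  nlinarith

-- Step 2: Cauchy estimate
lemma step2 (c lam M : ℝ) (hc : 0 < c) (hlam : 0 < lam) (hM : 0 < M)
    (f f' : ℝ → Matrix (Fin 2) (Fin 2) ℝ) (hf : ∀ t, HasDerivAt f (f' t) t)
    (hf'c : Continuous f')
    (hbnd : ∀ t, 0 ≤ t → ‖f' t‖ ≤ c * M * Real.exp (-lam * t)) :
    ∀ s t : ℝ, 0 ≤ s → s ≤ t → ‖f t - f s‖ ≤ (c * M / lam) * Real.exp (-lam * s) := by
  intro s t hs hst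
  have hftc : f t - f s = ∫ τ in s..t, f' τ := by
    rw [intervalIntegral.integral_eq_sub_of_hasDerivAt (fun x _ => hf x)
      (hf'c.intervalIntegrable s t)]
  have hgc : Continuous (fun τ : ℝ => c * M * Real.exp (-lam * τ)) := by continuity
  have hF : ∀ τ : ℝ, HasDerivAt (fun τ : ℝ => -(c * M / lam) * Real.exp (-lam * τ))
      (c * M * Real.exp (-lam * τ)) τ := by
    intro τ
    have hlin : HasDerivAt (fun x : ℝ => -lam * x) (-lam) τ := by
      simpa using (hasDerivAt_id τ).const_mul (-lam)
    have := hlin.exp.const_mul (-(c * M / lam))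
    refine this.congr_deriv ?_
    field_simp
  have hintg : (∫ τ in s..t, c * M * Real.exp (-lam * τ)) =
      (c * M / lam) * (Real.exp (-lam * s) - Real.exp (-lam * t)) := by
    rw [intervalIntegral.integral_eq_sub_of_hasDerivAt (fun x _ => hF x)
      (hgc.intervalIntegrable s t)]
    ring
  rw [hftc]
  have hexp : Real.exp (-lam * t) ≤ Real.exp (-lam * s) := by
    apply Real.exp_le_exp.mpr; nlinarith
  have hcMl : 0 ≤ c * M / lam := by positivity
  calc ‖∫ τ in s..t, f' τ‖ ≤ |∫ τ in s..t, c * M * Real.exp (-lam * τ)| := by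
        apply intervalIntegral.norm_integral_le_abs_of_norm_le _ (hgc.intervalIntegrable s t)
        have : ∀ τ ∈ Set.uIoc s t, ‖f' τ‖ ≤ c * M * Real.exp (-lam * τ) := by
          intro τ hτ
          rw [Set.uIoc_of_le hst] at hτ
          exact hbnd τ (hs.trans hτ.1.le)
        exact (MeasureTheory.ae_restrict_iff' measurableSet_uIoc).mpr
          (Filter.Eventually.of_forall this)
    _ = (c * M / lam) * (Real.exp (-lam * s) - Real.exp (-lam * t)) := by
        rw [hintg, abs_of_nonneg (by nlinarith)]
    _ ≤ (c * M / lam) * Real.exp (-lam * s) := by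
        have h1 : 0 < Real.exp (-lam * t) := Real.exp_pos _
        nlinarith

-- Step 3: combined decay-limit lemma
lemma decay_limit (c lam : ℝ) (hc : 0 < c) (hlam : 0 < lam)
    (f f' : ℝ → Matrix (Fin 2) (Fin 2) ℝ) (hf : ∀ t, HasDerivAt f (f' t) t)
    (hf'c : Continuous f')
    (hbound : ∀ t, 0 ≤ t → ‖f' t‖ ≤ c * Real.exp (-lam * t) * ‖f t‖) :
    ∃ (L : Matrix (Fin 2) (Fin 2) ℝ) (K : ℝ), 0 < K ∧ (∀ t, 0 ≤ t → ‖f t‖ ≤ K) ∧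
      ∀ t, 0 ≤ t → ‖f t - L‖ ≤ K * Real.exp (-lam * t) := by
  set M := (‖f 0‖ + 1) * Real.exp ((c+1)/lam) with hMdef
  have hM : 0 < M := by positivity
  have hMb : ∀ t, 0 ≤ t → ‖f t‖ ≤ M := step1 c lam hc hlam f f' hf hbound
  have hbnd : ∀ t, 0 ≤ t → ‖f' t‖ ≤ c * M * Real.exp (-lam * t) := by
    intro t ht
    calc ‖f' t‖ ≤ c * Real.exp (-lam * t) * ‖f t‖ := hbound t ht
      _ ≤ c * Real.exp (-lam * t) * M := by
          apply mul_le_mul_of_nonneg_left (hMb t ht) (by positivity)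
      _ = c * M * Real.exp (-lam * t) := by ring
  have hcauchy := step2 c lam M hc hlam hM f f' hf hf'c hbnd
  set K' := c * M / lam with hK'def
  have hK' : 0 < K' := by positivity
  -- sequence
  have hseq : CauchySeq (fun n : ℕ => f n) := by
    apply cauchySeq_of_le_geometric (Real.exp (-lam)) K'
      (Real.exp_lt_one_iff.mpr (by linarith))
    intro n
    rw [dist_eq_norm, norm_sub_rev]
    have := hcauchy n (n+1) (Nat.cast_nonneg n) (by push_cast; linarith)
    calc ‖f ↑(n + 1) - f ↑n‖ ≤ K' * Real.exp (-lam * n) := by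
          push_cast
          exact_mod_cast this
      _ = K' * Real.exp (-lam) ^ n := by
          rw [← Real.exp_nat_mul]; ring_nf
  obtain ⟨L, hL⟩ := cauchySeq_tendsto_of_complete hseq
  refine ⟨L, M + K', by positivity, fun t ht => (hMb t ht).trans (by linarith), ?_⟩
  intro t ht
  have hlim : Filter.Tendsto (fun n : ℕ => ‖f t - f n‖) Filter.atTop (nhds ‖f t - L‖) :=
    ((continuous_const.sub continuous_id).norm.continuousAt.tendsto).comp hL
  have hle : ∀ᶠ n : ℕ in Filter.atTop, ‖f t - f n‖ ≤ K' * Real.exp (-lam * t) := by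
    filter_upwards [Filter.eventually_ge_atTop ⌈t⌉₊] with n hn
    rw [norm_sub_rev]
    exact hcauchy t n ht ((Nat.le_ceil t).trans (by exact_mod_cast hn))
  have := le_of_tendsto hlim hle
  refine this.trans ?_
  have : 0 < Real.exp (-lam * t) := Real.exp_pos _
  nlinarith

lemma inv_deriv (G C : ℝ → Matrix (Fin 2) (Fin 2) ℝ)
    (hC : ∀ t : ℝ, HasDerivAt C (G t * C t) t)
    (hC_inv : ∀ t : ℝ, IsUnit (C t)) (t : ℝ) :
    HasDerivAt (fun s => (C s)⁻¹) (-((C t)⁻¹ * G t)) t := by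
  obtain ⟨u, hu⟩ := hC_inv t
  have h1 : HasFDerivAt (Ring.inverse : Matrix (Fin 2) (Fin 2) ℝ → _)
      (-(ContinuousLinearMap.mulLeftRight ℝ _ ↑u⁻¹ ↑u⁻¹)) (C t) := by
    rw [← hu]; exact hasFDerivAt_ringInverse u
  have h2 := h1.comp_hasDerivAt t (hC t)
  have heq : (fun s => (C s)⁻¹) = fun s => Ring.inverse (C s) := by
    funext s; rw [Matrix.nonsing_inv_eq_ringInverse]
  rw [heq]
  refine h2.congr_deriv ?_
  have huinv : (↑u⁻¹ : Matrix (Fin 2) (Fin 2) ℝ) = (C t)⁻¹ := by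
    rw [Matrix.nonsing_inv_eq_ringInverse, ← hu, Ring.inverse_unit]
  simp only [ContinuousLinearMap.neg_apply, ContinuousLinearMap.mulLeftRight_apply, huinv]
  have hCu : C t * (C t)⁻¹ = 1 := by
    rw [← huinv, ← hu]; exact_mod_cast u.mul_inv
  rw [mul_assoc, mul_assoc, hCu, mul_one]

/-- "exponential death": if the coefficient matrix `G` of `C' = G(t)C`
decays exponentially in both time directions, `‖G(t)‖ ≤ c·e^{−λ|t|}`, and `C` is a
fundamental solution matrix (invertible for every `t`), then there exist a constant
matrix `N` and a constant `b > 0` such that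
`‖C(t)·C(−t)⁻¹ − N‖ ≤ b·e^{−λt}` for all `t > 0`. -/
theorem stmt_7 (c lam : ℝ) (hc : 0 < c) (hlam : 0 < lam)
    (G : ℝ → Matrix (Fin 2) (Fin 2) ℝ) (hG_cont : Continuous G)
    (hG : ∀ t : ℝ, ‖G t‖ ≤ c * Real.exp (-lam * |t|))
    (C : ℝ → Matrix (Fin 2) (Fin 2) ℝ)
    (hC : ∀ t : ℝ, HasDerivAt C (G t * C t) t)
    (hC_inv : ∀ t : ℝ, IsUnit (C t)) :
    ∃ (N : Matrix (Fin 2) (Fin 2) ℝ) (b : ℝ), 0 < b ∧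
      ∀ t : ℝ, 0 < t → ‖C t * (C (-t))⁻¹ - N‖ ≤ b * Real.exp (-lam * t) := by
  have hCcont : Continuous C := by
    rw [continuous_iff_continuousAt]; exact fun t => (hC t).continuousAt
  obtain ⟨L₁, K₁, hK₁, hb₁, hl₁⟩ := decay_limit c lam hc hlam C (fun t => G t * C t) hC
    (hG_cont.mul hCcont)
    (fun t ht => by
      calc ‖G t * C t‖ ≤ ‖G t‖ * ‖C t‖ := norm_mul_le _ _
        _ ≤ c * Real.exp (-lam * |t|) * ‖C t‖ := by
            apply mul_le_mul_of_nonneg_right (hG t) (norm_nonneg _)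
        _ = c * Real.exp (-lam * t) * ‖C t‖ := by rw [abs_of_nonneg ht])
  set D : ℝ → Matrix (Fin 2) (Fin 2) ℝ := fun t => (C (-t))⁻¹ with hDdef
  have hD : ∀ t : ℝ, HasDerivAt D (D t * G (-t)) t := by
    intro t
    have h1 := (inv_deriv G C hC hC_inv (-t)).scomp t (hasDerivAt_neg t)
    refine h1.congr_deriv ?_
    simp [hDdef]
  have hDcont : Continuous D := by
    rw [continuous_iff_continuousAt]; exact fun t => (hD t).continuousAt
  obtain ⟨L₂, K₂, hK₂, hb₂, hl₂⟩ := decay_limit c lam hc hlam D (fun t => D t * G (-t)) hD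
    (hDcont.mul (hG_cont.comp continuous_neg))
    (fun t ht => by
      calc ‖D t * G (-t)‖ ≤ ‖D t‖ * ‖G (-t)‖ := norm_mul_le _ _
        _ ≤ ‖D t‖ * (c * Real.exp (-lam * |(-t)|)) := by
            apply mul_le_mul_of_nonneg_left (hG (-t)) (norm_nonneg _)
        _ = c * Real.exp (-lam * t) * ‖D t‖ := by
            rw [abs_neg, abs_of_nonneg ht]; ring)
  refine ⟨L₁ * L₂, K₁ * K₂ + ‖L₁‖ * K₂ + 1, by positivity, ?_⟩
  intro t ht
  have hsplit : C t * (C (-t))⁻¹ - L₁ * L₂ = (C t - L₁) * D t + L₁ * (D t - L₂) := by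
    simp only [hDdef]; noncomm_ring
  rw [hsplit]
  have ht' : (0:ℝ) ≤ t := ht.le
  have e1 : ‖(C t - L₁) * D t‖ ≤ (K₁ * Real.exp (-lam * t)) * K₂ :=
    (norm_mul_le _ _).trans (mul_le_mul (hl₁ t ht') (hb₂ t ht') (norm_nonneg _) (by positivity))
  have e2 : ‖L₁ * (D t - L₂)‖ ≤ ‖L₁‖ * (K₂ * Real.exp (-lam * t)) :=
    (norm_mul_le _ _).trans (mul_le_mul_of_nonneg_left (hl₂ t ht') (norm_nonneg _))
  have hexp : 0 < Real.exp (-lam * t) := Real.exp_pos _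
  calc ‖(C t - L₁) * D t + L₁ * (D t - L₂)‖ ≤ ‖(C t - L₁) * D t‖ + ‖L₁ * (D t - L₂)‖ :=
        norm_add_le _ _
    _ ≤ (K₁ * Real.exp (-lam * t)) * K₂ + ‖L₁‖ * (K₂ * Real.exp (-lam * t)) := add_le_add e1 e2
    _ ≤ (K₁ * K₂ + ‖L₁‖ * K₂ + 1) * Real.exp (-lam * t) := by nlinarith
end

section
/- Let κ > 0, T > 0, let B = [[0, 1], [−2κ, 0]], and let M = I + T·B + R be a 2×2 real matrix with ‖R‖ < T·min(1, 2κ), where ‖·‖ is the operator norm induced by the Euclidean norm. Then for every nonzero u = (u₁, u₂) ∈ ℝ², (M·u)·u^⊥ ≠ 0 where u^⊥ = (−u₂, u₁); consequently M has no real eigenvector and no real eigenvalue, and in particular |tr M| < 2 when det M = 1. -/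
open scoped Matrix.Norms.L2Operator
open Matrix

lemma aux_mulVec_norm (R : Matrix (Fin 2) (Fin 2) ℝ) (u : Fin 2 → ℝ) :
    (R.mulVec u 0) ^ 2 + (R.mulVec u 1) ^ 2 ≤ ‖R‖ ^ 2 * ((u 0) ^ 2 + (u 1) ^ 2) := by
  have h := R.l2_opNorm_mulVec ((EuclideanSpace.equiv (Fin 2) ℝ).symm u)
  have hnormu : ‖(EuclideanSpace.equiv (Fin 2) ℝ).symm u‖
      = Real.sqrt ((u 0) ^ 2 + (u 1) ^ 2) := by
    rw [EuclideanSpace.norm_eq]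
    congr 1
    simp [Fin.sum_univ_two, sq_abs]
  have hmv : (R *ᵥ ((EuclideanSpace.equiv (Fin 2) ℝ).symm u) : Fin 2 → ℝ) = R *ᵥ u := rfl
  have hnormv : ‖(EuclideanSpace.equiv (Fin 2) ℝ).symm
        (R *ᵥ ((EuclideanSpace.equiv (Fin 2) ℝ).symm u))‖
      = Real.sqrt ((R.mulVec u 0) ^ 2 + (R.mulVec u 1) ^ 2) := by
    rw [EuclideanSpace.norm_eq]
    congr 1
    simp [Fin.sum_univ_two, sq_abs, hmv]
  rw [hnormv, hnormu] at h
  have h1 : (0:ℝ) ≤ (R.mulVec u 0) ^ 2 + (R.mulVec u 1) ^ 2 := by positivity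
  have h2 : (0:ℝ) ≤ (u 0) ^ 2 + (u 1) ^ 2 := by positivity
  have hs1 := Real.sq_sqrt h1
  have hs2 := Real.sq_sqrt h2
  have hn1 := Real.sqrt_nonneg ((R.mulVec u 0) ^ 2 + (R.mulVec u 1) ^ 2)
  have hn2 := Real.sqrt_nonneg ((u 0) ^ 2 + (u 1) ^ 2)
  have hR0 : (0:ℝ) ≤ ‖R‖ := norm_nonneg R
  nlinarith [sq_nonneg (Real.sqrt ((R.mulVec u 0) ^ 2 + (R.mulVec u 1) ^ 2)
    - ‖R‖ * Real.sqrt ((u 0) ^ 2 + (u 1) ^ 2))]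

/-- if `M = I + T·B + R` with `B = [[0,1],[−2κ,0]]`, `κ, T > 0` and
`‖R‖ < T·min(1,2κ)` in the operator norm induced by the Euclidean norm, then
`(Mu)·u^⊥ ≠ 0` for every nonzero `u`, so `M` has no real eigenvector and no real
eigenvalue; in particular `|tr M| < 2` when `det M = 1`. -/
theorem stmt_19 (κ T : ℝ) (hκ : 0 < κ) (hT : 0 < T)
    (R M : Matrix (Fin 2) (Fin 2) ℝ)
    (hM : M = 1 + T • (!![0, 1; -(2 * κ), 0] : Matrix (Fin 2) (Fin 2) ℝ) + R)
    (hR : ‖R‖ < T * min 1 (2 * κ)) :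
    (∀ u : Fin 2 → ℝ, u ≠ 0 →
        dotProduct (M.mulVec u) ![-(u 1), u 0] ≠ 0) ∧
      (∀ (r : ℝ) (u : Fin 2 → ℝ), u ≠ 0 → M.mulVec u ≠ r • u) ∧
      (M.det = 1 → |M.trace| < 2) := by
  have key : ∀ u : Fin 2 → ℝ, u ≠ 0 →
      dotProduct (M.mulVec u) ![-(u 1), u 0] < 0 := by
    intro u hu
    have hu2 : (u 0) ^ 2 + (u 1) ^ 2 > 0 := by
      rcases (show u 0 ≠ 0 ∨ u 1 ≠ 0 by
        by_contra h
        push_neg at h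
        apply hu
        ext i
        fin_cases i <;> simp [h.1, h.2]) with h | h <;> positivity
    have hdot : dotProduct (M.mulVec u) ![-(u 1), u 0]
        = -T * ((u 1) ^ 2 + 2 * κ * (u 0) ^ 2)
          + (-(R.mulVec u 0) * u 1 + (R.mulVec u 1) * u 0) := by
      subst hM
      simp [Matrix.add_mulVec, Matrix.smul_mulVec, Matrix.mulVec,
        dotProduct, Fin.sum_univ_two]
      ring
    rw [hdot]
    have hbound := aux_mulVec_norm R u
    have hmin : ‖R‖ * ((u 0) ^ 2 + (u 1) ^ 2)
        < T * ((u 1) ^ 2 + 2 * κ * (u 0) ^ 2) := by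
      have h1 : T * min 1 (2*κ) * ((u 0) ^ 2 + (u 1) ^ 2)
          ≤ T * ((u 1) ^ 2 + 2 * κ * (u 0) ^ 2) := by
        rcases min_cases 1 (2*κ) with ⟨he, hle⟩ | ⟨he, hle⟩
        · rw [he]
          nlinarith [mul_nonneg (mul_nonneg hT.le (sub_nonneg.mpr hle)) (sq_nonneg (u 0))]
        · rw [he]
          nlinarith [mul_nonneg (mul_nonneg hT.le (sub_nonneg.mpr hle.le)) (sq_nonneg (u 1))]
      nlinarith
    have hR0 : (0:ℝ) ≤ ‖R‖ := norm_nonneg R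
    have hDsq : (-(R.mulVec u 0) * u 1 + (R.mulVec u 1) * u 0) ^ 2
        ≤ (‖R‖ * ((u 0) ^ 2 + (u 1) ^ 2)) ^ 2 := by
      nlinarith [sq_nonneg ((R.mulVec u 0) * u 0 + (R.mulVec u 1) * u 1),
        mul_le_mul_of_nonneg_right hbound hu2.le]
    have hDle : -(R.mulVec u 0) * u 1 + (R.mulVec u 1) * u 0
        ≤ ‖R‖ * ((u 0) ^ 2 + (u 1) ^ 2) := by
      have h0 : (0:ℝ) ≤ ‖R‖ * ((u 0) ^ 2 + (u 1) ^ 2) := mul_nonneg hR0 hu2.le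
      nlinarith
    linarith
  have part1 : ∀ u : Fin 2 → ℝ, u ≠ 0 →
      dotProduct (M.mulVec u) ![-(u 1), u 0] ≠ 0 :=
    fun u hu => ne_of_lt (key u hu)
  have part2 : ∀ (r : ℝ) (u : Fin 2 → ℝ), u ≠ 0 → M.mulVec u ≠ r • u := by
    intro r u hu heq
    apply part1 u hu
    rw [heq]
    simp [dotProduct, Fin.sum_univ_two]
    ring
  refine ⟨part1, part2, ?_⟩
  intro hdet
  by_contra habs
  push_neg at habs
  set t := M.trace with ht
  have hdisc : (0:ℝ) ≤ t ^ 2 - 4 := by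
    have := abs_nonneg t
    nlinarith [sq_abs t]
  set s := Real.sqrt (t ^ 2 - 4) with hs
  have hs2 : s ^ 2 = t ^ 2 - 4 := Real.sq_sqrt hdisc
  set r := (t + s) / 2 with hr
  have hroot : 1 - r * t + r ^ 2 = 0 := by
    rw [hr]; nlinarith
  have hdet0 : (M - r • (1 : Matrix (Fin 2) (Fin 2) ℝ)).det = 0 := by
    have hd := hdet
    rw [Matrix.det_fin_two] at hd ⊢
    have htr : t = M 0 0 + M 1 1 := by rw [ht, Matrix.trace_fin_two]
    have e00 : (M - r • (1 : Matrix (Fin 2) (Fin 2) ℝ)) 0 0 = M 0 0 - r := by simp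
    have e01 : (M - r • (1 : Matrix (Fin 2) (Fin 2) ℝ)) 0 1 = M 0 1 := by simp
    have e10 : (M - r • (1 : Matrix (Fin 2) (Fin 2) ℝ)) 1 0 = M 1 0 := by simp
    have e11 : (M - r • (1 : Matrix (Fin 2) (Fin 2) ℝ)) 1 1 = M 1 1 - r := by simp
    rw [e00, e01, e10, e11]
    linear_combination hd + hroot + r * htr
  obtain ⟨v, hv0, hv⟩ := (Matrix.exists_mulVec_eq_zero_iff).mpr hdet0
  apply part2 r v hv0
  have hsub : (M - r • (1 : Matrix (Fin 2) (Fin 2) ℝ)).mulVec v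
      = M.mulVec v - r • v := by
    rw [Matrix.sub_mulVec, Matrix.smul_mulVec, Matrix.one_mulVec]
  rw [hv] at hsub
  exact (sub_eq_zero.mp hsub.symm)
end
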